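/- Let N ≥ 3, let Γ₁,…,Γ_N be nonzero real numbers with Γ₂ + Γ₃ ≠ 0, let a, b ∈ ℂ be nonzero, and let Λ ∈ ℂ with |Λ| = 1 satisfy −conj(Λ)·(a/b) = (Γ₂Γ₃ + (Γ₂+Γ₃)·∑_{j∉{2,3}} Γ_j)/(Γ₂+Γ₃) and −Λ·(a/b) = (Γ₁Γ₂ + Γ₁Γ₃ + Γ₂Γ₃)/(Γ₂+Γ₃). Then Λ ∈ {1, −1, i, −i}. Moreover: (a) if Λ = 1 or Λ = −1, then ∑_{j=4}^N Γ_j = 0; (b) if Λ = i or Λ = −i and additionally ∑_{1≤j<k≤N} Γ_j·Γ_k = 0, then Γ₁Γ₂ + Γ₁Γ₃ + Γ₂Γ₃ = ∑_{4≤j<k≤N} Γ_j·Γ_k + Γ₁·∑_{j=4}^N Γ_j. -/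

import Mathlib

open Finset

/-- Proposition 4.6 (algebraic content): isolated triangle of z-strokes with
vertices 1, 2, 3 (indices ⟨0⟩, ⟨1⟩, ⟨2⟩), where 2 and 3 are z-circled. -/
theorem isolated_z_triangle
    (N : ℕ) (hN : 3 ≤ N) (Γ : Fin N → ℝ) (hΓ : ∀ i, Γ i ≠ 0)
    (h23 : Γ ⟨1, by omega⟩ + Γ ⟨2, by omega⟩ ≠ 0)
    (a b : ℂ) (ha : a ≠ 0) (hb : b ≠ 0)
    (Λ : ℂ) (hΛ : ‖Λ‖ = 1)
    (h1 : -((starRingEnd ℂ) Λ) * (a / b) =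
      (((Γ ⟨1, by omega⟩ * Γ ⟨2, by omega⟩ +
          (Γ ⟨1, by omega⟩ + Γ ⟨2, by omega⟩) *
            ∑ j ∈ Finset.univ.filter
              (fun j : Fin N => j ≠ ⟨1, by omega⟩ ∧ j ≠ ⟨2, by omega⟩), Γ j) /
        (Γ ⟨1, by omega⟩ + Γ ⟨2, by omega⟩) : ℝ) : ℂ))
    (h2 : -Λ * (a / b) =
      (((Γ ⟨0, by omega⟩ * Γ ⟨1, by omega⟩ + Γ ⟨0, by omega⟩ * Γ ⟨2, by omega⟩ +
          Γ ⟨1, by omega⟩ * Γ ⟨2, by omega⟩) /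
        (Γ ⟨1, by omega⟩ + Γ ⟨2, by omega⟩) : ℝ) : ℂ)) :
    (Λ = 1 ∨ Λ = -1 ∨ Λ = Complex.I ∨ Λ = -Complex.I) ∧
    ((Λ = 1 ∨ Λ = -1) →
      ∑ j ∈ Finset.univ.filter (fun j : Fin N => 3 ≤ (j : ℕ)), Γ j = 0) ∧
    ((Λ = Complex.I ∨ Λ = -Complex.I) →
      (∑ j : Fin N, ∑ k ∈ Finset.univ.filter (fun k => j < k), Γ j * Γ k) = 0 →
      Γ ⟨0, by omega⟩ * Γ ⟨1, by omega⟩ + Γ ⟨0, by omega⟩ * Γ ⟨2, by omega⟩ +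
          Γ ⟨1, by omega⟩ * Γ ⟨2, by omega⟩ =
        (∑ j : Fin N, ∑ k ∈ Finset.univ.filter (fun k => j < k ∧ 3 ≤ (j : ℕ)),
          Γ j * Γ k) +
        Γ ⟨0, by omega⟩ *
          ∑ j ∈ Finset.univ.filter (fun j : Fin N => 3 ≤ (j : ℕ)), Γ j) := by
  have hN0 : 0 < N := by omega
  have hN1 : 1 < N := by omega
  have hN2 : 2 < N := by omega
  set i0 : Fin N := ⟨0, by omega⟩ with hi0
  set i1 : Fin N := ⟨1, by omega⟩ with hi1
  set i2 : Fin N := ⟨2, by omega⟩ with hi2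
  set B : Finset (Fin N) := Finset.univ.filter (fun j : Fin N => 3 ≤ (j : ℕ)) with hB
  set Sg := ∑ j ∈ B, Γ j with hSg
  have hi0B : i0 ∉ B := by simp [hB, hi0]
  have hTset : Finset.univ.filter (fun j : Fin N => j ≠ i1 ∧ j ≠ i2) = insert i0 B := by
    ext j
    simp only [hB, hi0, hi1, hi2, Finset.mem_filter, Finset.mem_univ, true_and,
      Finset.mem_insert, Fin.ext_iff, ne_eq]
    omega
  have hT : ∑ j ∈ Finset.univ.filter (fun j : Fin N => j ≠ i1 ∧ j ≠ i2), Γ j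
      = Γ i0 + Sg := by
    rw [hTset, Finset.sum_insert hi0B]
  rw [hT] at h1
  set r1 : ℝ := (Γ i1 * Γ i2 + (Γ i1 + Γ i2) * (Γ i0 + Sg)) / (Γ i1 + Γ i2) with hr1def
  set r2 : ℝ := (Γ i0 * Γ i1 + Γ i0 * Γ i2 + Γ i1 * Γ i2) / (Γ i1 + Γ i2) with hr2def
  have hw : a / b ≠ 0 := div_ne_zero ha hb
  have hΛne : Λ ≠ 0 := by intro h; simp [h] at hΛ
  have hconj : (starRingEnd ℂ) Λ * Λ = 1 := by
    rw [mul_comm, Complex.mul_conj, Complex.normSq_eq_norm_sq, hΛ]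
    norm_num
  have hr1 : r1 ≠ 0 := by
    intro h
    rw [h] at h1
    simp only [Complex.ofReal_zero, neg_mul, neg_eq_zero, mul_eq_zero, map_eq_zero] at h1
    rcases h1 with h | h
    · exact hΛne h
    · exact hw h
  have hΛsq : Λ ^ 2 * (r1 : ℂ) = (r2 : ℂ) := by
    linear_combination (-Λ ^ 2) * h1 + h2 - Λ * (a / b) * hconj
  have ht : Λ ^ 2 = ((r2 / r1 : ℝ) : ℂ) := by
    rw [Complex.ofReal_div, eq_div_iff (Complex.ofReal_ne_zero.mpr hr1)]
    exact hΛsq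
  have habs : |r2 / r1| = 1 := by
    have : ‖Λ ^ 2‖ = 1 := by rw [norm_pow, hΛ]; norm_num
    rwa [ht, Complex.norm_real, Real.norm_eq_abs] at this
  have ht2 : r2 / r1 = 1 ∨ r2 / r1 = -1 := (abs_eq (by norm_num)).mp habs
  have hS : Γ i1 + Γ i2 ≠ 0 := h23
  -- part 1
  have part1 : Λ = 1 ∨ Λ = -1 ∨ Λ = Complex.I ∨ Λ = -Complex.I := by
    rcases ht2 with h | h
    · have hsq : Λ ^ 2 = 1 := by rw [ht, h]; norm_num
      have : (Λ - 1) * (Λ + 1) = 0 := by linear_combination hsq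
      rcases mul_eq_zero.mp this with h' | h'
      · exact Or.inl (sub_eq_zero.mp h')
      · exact Or.inr (Or.inl (by linear_combination h'))
    · have hsq : Λ ^ 2 = -1 := by rw [ht, h]; norm_num
      have : (Λ - Complex.I) * (Λ + Complex.I) = 0 := by
        linear_combination hsq - Complex.I_sq
      rcases mul_eq_zero.mp this with h' | h'
      · exact Or.inr (Or.inr (Or.inl (sub_eq_zero.mp h')))
      · exact Or.inr (Or.inr (Or.inr (by linear_combination h')))
  refine ⟨part1, ?_, ?_⟩
  · -- Λ = ±1 case
    intro hcase
    have hsq : Λ ^ 2 = 1 := by rcases hcase with h | h <;> rw [h] <;> ring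
    have h1' : r2 / r1 = 1 := by
      have : ((r2 / r1 : ℝ) : ℂ) = 1 := by rw [← ht, hsq]
      exact_mod_cast this
    have hr12 : r2 = r1 := by
      field_simp at h1'
      exact h1'
    rw [hr1def, hr2def, div_eq_div_iff hS hS] at hr12
    have hx : (Γ i1 + Γ i2) * ((Γ i1 + Γ i2) * Sg) = 0 := by linear_combination -hr12
    rcases mul_eq_zero.mp hx with h | h
    · exact absurd h hS
    rcases mul_eq_zero.mp h with h | h
    · exact absurd h hS
    · exact h
  · -- Λ = ±i case
    intro hcase hL
    have hsq : Λ ^ 2 = -1 := by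
      rcases hcase with h | h <;> rw [h] <;> ring_nf <;> simp [Complex.I_sq]
    have h1' : r2 / r1 = -1 := by
      have : ((r2 / r1 : ℝ) : ℂ) = -1 := by rw [← ht, hsq]
      exact_mod_cast this
    have hr12 : r2 = -r1 := by
      field_simp at h1'
      linarith
    rw [hr1def, hr2def] at hr12
    rw [← neg_div] at hr12
    rw [div_eq_div_iff hS hS] at hr12
    have hx : (Γ i1 + Γ i2) * (2 * (Γ i0 * Γ i1 + Γ i0 * Γ i2 + Γ i1 * Γ i2)
        + (Γ i1 + Γ i2) * Sg) = 0 := by linear_combination hr12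
    have hkey : 2 * (Γ i0 * Γ i1 + Γ i0 * Γ i2 + Γ i1 * Γ i2)
        + (Γ i1 + Γ i2) * Sg = 0 := by
      rcases mul_eq_zero.mp hx with h | h
      · exact absurd h hS
      · exact h
    -- finset decompositions
    have hi1B : i1 ∉ insert i2 B := by
      simp [hB, hi1, hi2, Fin.ext_iff]
    have hi2B : i2 ∉ B := by simp [hB, hi2]
    have hi0B' : i0 ∉ insert i1 (insert i2 B) := by
      simp [hB, hi0, hi1, hi2, Fin.ext_iff]
    have hu : (Finset.univ : Finset (Fin N)) = insert i0 (insert i1 (insert i2 B)) := by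
      ext j
      simp only [hB, hi0, hi1, hi2, Finset.mem_univ, Finset.mem_insert,
        Finset.mem_filter, true_and, Fin.ext_iff, true_iff]
      omega
    have hf0 : Finset.univ.filter (fun k : Fin N => i0 < k) = insert i1 (insert i2 B) := by
      ext j
      simp only [hB, hi0, hi1, hi2, Finset.mem_filter, Finset.mem_univ, true_and,
        Finset.mem_insert, Fin.lt_def, Fin.ext_iff]
      omega
    have hf1 : Finset.univ.filter (fun k : Fin N => i1 < k) = insert i2 B := by
      ext j
      simp only [hB, hi0, hi1, hi2, Finset.mem_filter, Finset.mem_univ, true_and,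
        Finset.mem_insert, Fin.lt_def, Fin.ext_iff]
      omega
    have hf2 : Finset.univ.filter (fun k : Fin N => i2 < k) = B := by
      ext j
      simp only [hB, hi2, Finset.mem_filter, Finset.mem_univ, true_and, Fin.lt_def]
      omega
    have hL' : (∑ j : Fin N, ∑ k ∈ Finset.univ.filter (fun k => j < k ∧ 3 ≤ (j : ℕ)),
          Γ j * Γ k)
        = ∑ j ∈ B, ∑ k ∈ Finset.univ.filter (fun k => j < k), Γ j * Γ k := by
      rw [hB, Finset.sum_filter]
      apply Finset.sum_congr rfl
      intro j _
      by_cases h : 3 ≤ (j : ℕ)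
      · rw [if_pos h]
        congr 1
        ext k
        simp [h]
      · rw [if_neg h]
        simp [h]
    have hLsum : (∑ j : Fin N, ∑ k ∈ Finset.univ.filter (fun k => j < k), Γ j * Γ k)
        = Γ i0 * Γ i1 + Γ i0 * Γ i2 + Γ i1 * Γ i2 + (Γ i0 + Γ i1 + Γ i2) * Sg
          + ∑ j ∈ B, ∑ k ∈ Finset.univ.filter (fun k => j < k), Γ j * Γ k := by
      have hsplit : ∀ f : Fin N → ℝ,
          ∑ j : Fin N, f j = f i0 + (f i1 + (f i2 + ∑ j ∈ B, f j)) := by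
        intro f
        rw [hu, Finset.sum_insert hi0B', Finset.sum_insert hi1B, Finset.sum_insert hi2B]
      rw [hsplit (fun j => ∑ k ∈ Finset.univ.filter (fun k => j < k), Γ j * Γ k)]
      rw [hf0, hf1, hf2, Finset.sum_insert hi1B, Finset.sum_insert hi2B,
        Finset.sum_insert hi2B, ← Finset.mul_sum, ← Finset.mul_sum, ← Finset.mul_sum,
        ← hSg]
      ring
    rw [hLsum] at hL
    rw [hL']
    linear_combination hkey - hL
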